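/- Let Σ be a signed simple graph and κ a minimal proper coloration of Σ. Then there exists a coloration κ* switching equivalent to κ with def(κ*) = ⌊χ(Σ)/2⌋; in particular the maximum switching deficiency M*(Σ) equals ⌊χ(Σ)/2⌋. -/

import Mathlib

/-- A signed simple graph: two edge-disjoint simple graphs on the same vertex set,
the positive edges and the negative edges. -/
structure SignedGraph (V : Type*) where
  pos : SimpleGraph V
  neg : SimpleGraph V
  disjoint : ∀ a b : V, ¬ (pos.Adj a b ∧ neg.Adj a b)

/-- The color set of size `n`: `{±1, …, ±k}` if `n = 2k`, and `{0, ±1, …, ±k}` if `n = 2k+1`. -/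
noncomputable def signedColorSet (n : ℕ) : Finset ℤ :=
  if Even n then (Finset.Icc (-((n / 2 : ℕ) : ℤ)) ((n / 2 : ℕ) : ℤ)).erase 0
  else Finset.Icc (-((n / 2 : ℕ) : ℤ)) ((n / 2 : ℕ) : ℤ)

/-- A proper coloration of a signed graph using the color set of size `n`. -/
def IsProperColoration {V : Type*} (S : SignedGraph V) (n : ℕ) (κ : V → ℤ) : Prop :=
  (∀ v, κ v ∈ signedColorSet n) ∧
  (∀ a b, S.pos.Adj a b → κ a ≠ κ b) ∧
  (∀ a b, S.neg.Adj a b → κ a ≠ -κ b)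

/-- The chromatic number: the least size of a color set admitting a proper coloration. -/
noncomputable def sChromaticNumber {V : Type*} (S : SignedGraph V) : ℕ :=
  sInf {n : ℕ | ∃ κ : V → ℤ, IsProperColoration S n κ}

/-- A minimal coloration: a proper coloration using the color set of size `χ(Σ)`. -/
def IsMinimalColoration {V : Type*} (S : SignedGraph V) (κ : V → ℤ) : Prop :=
  IsProperColoration S (sChromaticNumber S) κ

/-- The deficiency of a coloration: the number of unused colors from the color set of size `n`. -/
noncomputable def sDeficiency {V : Type*} [Fintype V] (n : ℕ) (κ : V → ℤ) : ℕ :=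
  (signedColorSet n \ Finset.image κ Finset.univ).card

/-- Maximum deficiency over minimal colorations. -/
noncomputable def maxDef {V : Type*} [Fintype V] (S : SignedGraph V) : ℕ :=
  sSup {d : ℕ | ∃ κ : V → ℤ, IsMinimalColoration S κ ∧ sDeficiency (sChromaticNumber S) κ = d}

/-- Minimum deficiency over minimal colorations. -/
noncomputable def minDef {V : Type*} [Fintype V] (S : SignedGraph V) : ℕ :=
  sInf {d : ℕ | ∃ κ : V → ℤ, IsMinimalColoration S κ ∧ sDeficiency (sChromaticNumber S) κ = d}

/-- A stable cover of the positive edges: a vertex cover of `E⁺` that is stable in `Σ`. -/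
def IsStableCover {V : Type*} (S : SignedGraph V) (T : Set V) : Prop :=
  (∀ a b, S.pos.Adj a b → a ∈ T ∨ b ∈ T) ∧
  (∀ a ∈ T, ∀ b ∈ T, ¬ S.pos.Adj a b ∧ ¬ S.neg.Adj a b)

/-- An edge `ab` has exactly one endpoint in `A`. -/
def crossing {V : Type*} (A : Set V) (a b : V) : Prop := ¬ ((a ∈ A) ↔ (b ∈ A))

/-- Switching a signed graph at a vertex set `A`: the sign of every edge with exactly one
endpoint in `A` is negated. -/
def SignedGraph.switch {V : Type*} (S : SignedGraph V) (A : Set V) : SignedGraph V where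
  pos :=
    { Adj := fun a b => (S.pos.Adj a b ∧ ¬ crossing A a b) ∨ (S.neg.Adj a b ∧ crossing A a b)
      symm := by
        refine ⟨fun a b h => ?_⟩
        unfold crossing at *
        rcases h with ⟨h1, h2⟩ | ⟨h1, h2⟩
        · exact Or.inl ⟨S.pos.adj_symm h1, by tauto⟩
        · exact Or.inr ⟨S.neg.adj_symm h1, by tauto⟩
      loopless := by
        refine ⟨fun a h => ?_⟩
        rcases h with ⟨h1, _⟩ | ⟨_, h2⟩
        · exact S.pos.irrefl h1
        · exact h2 Iff.rfl }
  neg :=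
    { Adj := fun a b => (S.neg.Adj a b ∧ ¬ crossing A a b) ∨ (S.pos.Adj a b ∧ crossing A a b)
      symm := by
        refine ⟨fun a b h => ?_⟩
        unfold crossing at *
        rcases h with ⟨h1, h2⟩ | ⟨h1, h2⟩
        · exact Or.inl ⟨S.neg.adj_symm h1, by tauto⟩
        · exact Or.inr ⟨S.pos.adj_symm h1, by tauto⟩
      loopless := by
        refine ⟨fun a h => ?_⟩
        rcases h with ⟨h1, _⟩ | ⟨_, h2⟩
        · exact S.neg.irrefl h1
        · exact h2 Iff.rfl }
  disjoint := by
    intro a b h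
    have := S.disjoint a b
    tauto

/-- General proper coloration with an arbitrary color set `C ⊆ ℤ`. -/
def IsProperWith {V : Type*} (S : SignedGraph V) (C : Set ℤ) (κ : V → ℤ) : Prop :=
  (∀ v, κ v ∈ C) ∧
  (∀ a b, S.pos.Adj a b → κ a ≠ κ b) ∧
  (∀ a b, S.neg.Adj a b → κ a ≠ -κ b)

open Classical in
/-- The coloration switching equivalent to `κ` via `A`: negate the colors on `A`. -/
noncomputable def switchColor {V : Type*} (A : Set V) (κ : V → ℤ) : V → ℤ :=
  fun v => if v ∈ A then -κ v else κ v

/-- The adjacency of the forcing graph `F(Σ)` for the matching `m`: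
a directed edge from `x` to `y` whenever `x ȳ` is a negative edge. -/
def ForcingAdj {V : Type*} (S : SignedGraph V) (m : V → V) (x y : V) : Prop :=
  S.neg.Adj x (m y)


/-- The maximum switching deficiency `M*(Σ)`. -/
noncomputable def maxSwitchDef {V : Type*} [Fintype V] (S : SignedGraph V) : ℕ :=
  sSup {d : ℕ | ∃ (κ : V → ℤ) (A : Set V), IsMinimalColoration S κ ∧
    sDeficiency (sChromaticNumber S) (switchColor A κ) = d}

lemma mem_signedColorSet {n : ℕ} {c : ℤ} :
    c ∈ signedColorSet n ↔
      (-((n / 2 : ℕ) : ℤ) ≤ c ∧ c ≤ ((n / 2 : ℕ) : ℤ) ∧ (Even n → c ≠ 0)) := by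
  unfold signedColorSet
  split_ifs with h <;> simp [Finset.mem_erase, Finset.mem_Icc] <;> tauto

lemma abs_switchColor {V : Type*} (A : Set V) (κ : V → ℤ) (v : V) :
    |switchColor A κ v| = |κ v| := by
  unfold switchColor; split_ifs <;> simp

/-- Key lemma: a minimal coloration uses, for every nonnegative color `j` in the color
set, at least one of the colors `j`, `-j`. -/
lemma minimal_pair_used {V : Type*} (S : SignedGraph V) (κ : V → ℤ)
    (hκ : IsMinimalColoration S κ) {j : ℤ} (hj0 : 0 ≤ j)
    (hjmem : j ∈ signedColorSet (sChromaticNumber S)) :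
    ∃ v, |κ v| = j := by
  by_contra h
  push_neg at h
  set n := sChromaticNumber S with hn
  obtain ⟨hmem, hpos, hneg⟩ := hκ
  have hbounds : ∀ v, -((n / 2 : ℕ) : ℤ) ≤ κ v ∧ κ v ≤ ((n / 2 : ℕ) : ℤ) ∧
      (Even n → κ v ≠ 0) := fun v => mem_signedColorSet.mp (hmem v)
  obtain ⟨hjl, hjr, hjz⟩ := mem_signedColorSet.mp hjmem
  have hne : ∀ v, κ v ≠ j ∧ κ v ≠ -j := by
    intro v
    have hv := h v
    rcases abs_cases (κ v) with ⟨h1, h2⟩ | ⟨h1, h2⟩ <;> constructor <;> omega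
  rcases eq_or_lt_of_le hj0 with hj0' | hj0'
  · -- j = 0, so n is odd and 0 is unused: κ is proper for color set of size n-1
    have hnodd : ¬ Even n := fun he => hjz he hj0'.symm
    have hn1 : (n - 1) / 2 = n / 2 := by
      rcases Nat.even_or_odd n with he | ho
      · exact absurd he hnodd
      · obtain ⟨m, hm⟩ := ho; omega
    have hprop : IsProperColoration S (n - 1) κ := by
      refine ⟨fun v => ?_, hpos, hneg⟩
      rw [mem_signedColorSet, hn1]
      obtain ⟨b1, b2, _⟩ := hbounds v
      refine ⟨b1, b2, fun _ => ?_⟩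
      have := (hne v).1
      omega
    have hle : sChromaticNumber S ≤ n - 1 := Nat.sInf_le ⟨κ, hprop⟩
    have hn1' : 1 ≤ n := by
      by_contra hc
      have : n = 0 := by omega
      exact hnodd (this ▸ Even.zero)
    omega
  · -- j ≥ 1 : replace colors ±(n/2) by ±j to get a proper coloration of size n-2
    set k : ℤ := ((n / 2 : ℕ) : ℤ) with hk
    have hk1 : 1 ≤ k := le_trans hj0' hjr
    have hn2 : 2 ≤ n := by
      have h1 := hk1
      rw [hk] at h1
      omega
    have hn2' : (((n - 2) / 2 : ℕ) : ℤ) = k - 1 := by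
      rw [hk]
      have h1 := hk1
      rw [hk] at h1
      omega
    have heven : Even (n - 2) ↔ Even n := by
      rw [Nat.even_sub hn2]
      simp
    set f : ℤ → ℤ := fun c => if c = k then j else if c = -k then -j else c with hf
    have hprop : IsProperColoration S (n - 2) (fun v => f (κ v)) := by
      refine ⟨fun v => ?_, fun a b hab => ?_, fun a b hab => ?_⟩
      · rw [mem_signedColorSet, hn2']
        obtain ⟨b1, b2, b3⟩ := hbounds v
        obtain ⟨e1, e2⟩ := hne v
        refine ⟨?_, ?_, fun he => ?_⟩
        · simp only [hf]; split_ifs <;> omega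
        · simp only [hf]; split_ifs <;> omega
        · have hv0 : κ v ≠ 0 := b3 (heven.mp he)
          simp only [hf]; split_ifs <;> omega
      · have hab' := hpos a b hab
        obtain ⟨ea1, ea2⟩ := hne a
        obtain ⟨eb1, eb2⟩ := hne b
        simp only [hf]; split_ifs <;> omega
      · have hab' := hneg a b hab
        obtain ⟨ea1, ea2⟩ := hne a
        obtain ⟨eb1, eb2⟩ := hne b
        simp only [hf]; split_ifs <;> omega
    have hle : sChromaticNumber S ≤ n - 2 := Nat.sInf_le ⟨_, hprop⟩
    omega

/-- Switching at the set of negatively colored vertices gives deficiency exactly `⌊n/2⌋`. -/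
lemma switch_neg_deficiency {V : Type*} [Fintype V] (S : SignedGraph V) (κ : V → ℤ)
    (hκ : IsMinimalColoration S κ) :
    sDeficiency (sChromaticNumber S) (switchColor {v | κ v < 0} κ) =
      sChromaticNumber S / 2 := by
  set n := sChromaticNumber S with hn
  set k : ℤ := ((n / 2 : ℕ) : ℤ) with hk
  have habs : switchColor {v | κ v < 0} κ = fun v => |κ v| := by
    funext v
    unfold switchColor
    by_cases hv : v ∈ {v | κ v < 0}
    · rw [if_pos hv]; exact (abs_of_neg hv).symm
    · rw [if_neg hv]
      exact (abs_of_nonneg (not_lt.mp hv)).symm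
  rw [habs]
  unfold sDeficiency
  have hset : signedColorSet n \ Finset.image (fun v => |κ v|) Finset.univ =
      Finset.Icc (-k) (-1) := by
    ext c
    simp only [Finset.mem_sdiff, Finset.mem_image, Finset.mem_univ, true_and,
      mem_signedColorSet, Finset.mem_Icc, not_exists]
    constructor
    · rintro ⟨⟨b1, b2, b3⟩, himg⟩
      refine ⟨b1, ?_⟩
      by_contra hc
      have hc0 : 0 ≤ c := by omega
      have hcmem : c ∈ signedColorSet n := mem_signedColorSet.mpr ⟨b1, b2, b3⟩
      obtain ⟨v, hv⟩ := minimal_pair_used S κ hκ hc0 hcmem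
      exact himg v hv
    · rintro ⟨h1, h2⟩
      refine ⟨⟨h1, by omega, fun _ => by omega⟩, fun v hv => ?_⟩
      have := abs_nonneg (κ v)
      omega
  rw [hset, Int.card_Icc, hk]
  omega

/-- Any switching of a minimal coloration has deficiency at most `⌊n/2⌋`. -/
lemma switch_deficiency_le {V : Type*} [Fintype V] (S : SignedGraph V) (κ : V → ℤ)
    (hκ : IsMinimalColoration S κ) (A : Set V) :
    sDeficiency (sChromaticNumber S) (switchColor A κ) ≤ sChromaticNumber S / 2 := by
  set n := sChromaticNumber S with hn
  set k : ℤ := ((n / 2 : ℕ) : ℤ) with hk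
  unfold sDeficiency
  have hcard : (Finset.Icc (1 : ℤ) k).card = n / 2 := by
    rw [Int.card_Icc, hk]; omega
  rw [← hcard]
  apply Finset.card_le_card_of_injOn (fun c => |c|)
  · intro c hc
    simp only [Finset.mem_coe, Finset.mem_sdiff, Finset.mem_image, Finset.mem_univ, true_and,
      not_exists] at hc
    obtain ⟨hcm, himg⟩ := hc
    obtain ⟨b1, b2, b3⟩ := mem_signedColorSet.mp hcm
    have hc0 : c ≠ 0 := by
      intro hc0
      subst hc0
      obtain ⟨v, hv⟩ := minimal_pair_used S κ hκ le_rfl hcm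
      refine himg v ?_
      have := abs_switchColor A κ v
      rcases abs_cases (switchColor A κ v) with ⟨h1, _⟩ | ⟨h1, _⟩ <;> omega
    simp only [Finset.mem_coe, Finset.mem_Icc]
    rcases abs_cases c with ⟨h1, _⟩ | ⟨h1, _⟩ <;> constructor <;> omega
  · intro c hc c' hc' hcc
    have hcc' : |c| = |c'| := hcc
    simp only [Finset.coe_sdiff, Set.mem_diff, Finset.coe_image, Finset.coe_univ,
      Set.image_univ, Set.mem_range, not_exists, Finset.mem_coe] at hc hc'
    by_contra hne
    obtain ⟨hcm, himg⟩ := hc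
    obtain ⟨hcm', himg'⟩ := hc'
    obtain ⟨b1, b2, b3⟩ := mem_signedColorSet.mp hcm
    obtain ⟨b1', b2', b3'⟩ := mem_signedColorSet.mp hcm'
    -- j := |c| is in the color set
    have hj0 : 0 ≤ |c| := abs_nonneg c
    have hcz : c ≠ 0 := by
      intro h0
      rcases abs_cases c' with ⟨h1, _⟩ | ⟨h1, _⟩ <;>
        (apply hne; subst h0; simp at hcc'; omega)
    have hjmem : |c| ∈ signedColorSet n := by
      rw [mem_signedColorSet]
      rcases abs_cases c with ⟨h1, _⟩ | ⟨h1, _⟩ <;>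
        exact ⟨by omega, by omega, fun _ => by omega⟩
    obtain ⟨v, hv⟩ := minimal_pair_used S κ hκ hj0 hjmem
    have hsv := abs_switchColor A κ v
    have : switchColor A κ v = c ∨ switchColor A κ v = c' := by
      rcases abs_cases (switchColor A κ v) with ⟨h1, _⟩ | ⟨h1, _⟩ <;>
        rcases abs_cases c with ⟨h2, _⟩ | ⟨h2, _⟩ <;>
          rcases abs_cases c' with ⟨h3, _⟩ | ⟨h3, _⟩ <;> omega
    rcases this with h | h
    · exact himg v h
    · exact himg' v h

/-- Every minimal coloration is switching equivalent to one of
deficiency `⌊χ(Σ)/2⌋`; in particular `M*(Σ) = ⌊χ(Σ)/2⌋`. -/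
theorem max_switching_deficiency {V : Type*} [Fintype V] (S : SignedGraph V)
    (κ : V → ℤ) (hκ : IsMinimalColoration S κ) :
    (∃ A : Set V,
        sDeficiency (sChromaticNumber S) (switchColor A κ) = sChromaticNumber S / 2) ∧
      maxSwitchDef S = sChromaticNumber S / 2 := by
  have h1 := switch_neg_deficiency S κ hκ
  refine ⟨⟨_, h1⟩, ?_⟩
  have hmem : sChromaticNumber S / 2 ∈
      {d : ℕ | ∃ (κ : V → ℤ) (A : Set V), IsMinimalColoration S κ ∧
        sDeficiency (sChromaticNumber S) (switchColor A κ) = d} :=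
    ⟨κ, {v | κ v < 0}, hκ, h1⟩
  have hub : ∀ d ∈ {d : ℕ | ∃ (κ : V → ℤ) (A : Set V), IsMinimalColoration S κ ∧
      sDeficiency (sChromaticNumber S) (switchColor A κ) = d},
      d ≤ sChromaticNumber S / 2 := by
    rintro d ⟨κ', A, hκ', rfl⟩
    exact switch_deficiency_le S κ' hκ' A
  exact le_antisymm (csSup_le ⟨_, hmem⟩ hub) (le_csSup ⟨_, hub⟩ hmem)
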